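/- Let X be a sofic shift. Then X satisfies Condition (∗) if and only if the left Krieger cover of X is the maximal essential subgraph of the past set cover of X; equivalently, the set of vertices of the maximal essential subgraph of the past set cover of X equals {P∞(x⁺) : x⁺ ∈ X⁺}, the vertex set of the left Krieger cover. -/

import Mathlib

namespace SymbolicDynamics

/-! ### Basic symbolic dynamics set-up

All shift spaces are realized inside the full shift over the countable ambient
alphabet `ℕ`; an actual shift space uses only a finite subset of `ℕ` as its
alphabet.  This gives a uniform setting in which shift spaces over varying
finite alphabets can be compared (as required by flow equivalence). -/

/-- Biinfinite sequences over the ambient alphabet `ℕ`. -/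
abbrev Seq : Type := ℤ → ℕ

/-- The shift map `σ`, `(σ x) i = x (i+1)`. -/
def shift (x : Seq) : Seq := fun i => x (i + 1)

/-- The word `x_i x_{i+1} ⋯ x_{i+n-1}` of length `n` occurring in `x` at position `i`. -/
def wordAt (x : Seq) (i : ℤ) (n : ℕ) : List ℕ :=
  List.ofFn fun k : Fin n => x (i + (k.val : ℤ))

/-- `w` occurs as a factor of the biinfinite sequence `x`. -/
def FactorOf (w : List ℕ) (x : Seq) : Prop := ∃ i : ℤ, wordAt x i w.length = w

/-- The language `B(X)`: all finite words occurring in points of `X`. -/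
def lang (X : Set Seq) : Set (List ℕ) := {w | ∃ x ∈ X, FactorOf w x}

/-- `X_F`: the set of biinfinite sequences containing no word of `F` as a factor. -/
def XF (F : Set (List ℕ)) : Set Seq := {x | ∀ w ∈ F, ¬ FactorOf w x}

/-- `X` is a shift space over the finite alphabet `A ⊆ ℕ`: `X` is a closed,
shift-invariant set of biinfinite sequences with letters in `A`. -/
def IsSubshift (A : Set ℕ) (X : Set Seq) : Prop :=
  A.Finite ∧ IsClosed X ∧ (∀ x, x ∈ X ↔ shift x ∈ X) ∧ ∀ x ∈ X, ∀ i, x i ∈ A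

/-- `X` is a shift space (over some finite alphabet). -/
def IsShiftSpace (X : Set Seq) : Prop := ∃ A : Set ℕ, IsSubshift A X

/-- A conjugacy between `X` and `Y`: a shift-commuting homeomorphism. -/
def Conjugate (X Y : Set Seq) : Prop :=
  ∃ φ : ↥X ≃ₜ ↥Y, ∀ x y : ↥X, shift x.1 = y.1 → shift (φ x).1 = (φ y).1

/-- The (globally defined) map `φ` restricts to a conjugacy from `X` onto `Y`:
there is a shift-commuting homeomorphism `X → Y` whose underlying map is `φ`. -/
def ConjugacyVia (φ : Seq → Seq) (X Y : Set Seq) : Prop :=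
  ∃ h : ↥X ≃ₜ ↥Y, (∀ x : ↥X, (h x).1 = φ x.1) ∧
    ∀ x y : ↥X, shift x.1 = y.1 → shift (h x).1 = (h y).1

/-- `y` is obtained from `x` by replacing every occurrence of the letter `a` by
`a ◇` (with `◇ = d`), possibly followed by one shift.  The reindexing function
`p` records the position in `y` of the `k`-th letter of `x`. -/
def ExpandsTo (a d : ℕ) (x y : Seq) : Prop :=
  ∃ p : ℤ → ℤ, (p 0 = 0 ∨ p 0 = -1) ∧
    (∀ k, p (k + 1) = p k + if x k = a then 2 else 1) ∧
    (∀ k, y (p k) = x k) ∧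
    ∀ k, x k = a → y (p k + 1) = d

/-- The symbol expansion `X^{a ↦ a◇}` with `◇ = d` (a symbol not in the alphabet
of `X`): all sequences obtained from points of `X` by replacing every
occurrence of `a` by `a◇`, together with all shifts of such sequences. -/
def symbolExpansion (X : Set Seq) (a d : ℕ) : Set Seq := {y | ∃ x ∈ X, ExpandsTo a d x y}

/-- Flow equivalence: the smallest equivalence relation on shift spaces (over
varying finite alphabets) containing conjugacy and relating every shift space
`X` to its symbol expansion `X^{a ↦ a◇}` for every letter `a` of the alphabet of
`X` and every new symbol `◇` (Parry–Sullivan). -/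
inductive FlowEquiv : Set Seq → Set Seq → Prop
  | of_conjugate {X Y : Set Seq} (hX : IsShiftSpace X) (hY : IsShiftSpace Y)
      (h : Conjugate X Y) : FlowEquiv X Y
  | expand {X : Set Seq} {A : Set ℕ} (a d : ℕ) (hX : IsSubshift A X)
      (ha : a ∈ A) (hd : d ∉ A) : FlowEquiv X (symbolExpansion X a d)
  | symm {X Y : Set Seq} : FlowEquiv X Y → FlowEquiv Y X
  | trans {X Y Z : Set Seq} : FlowEquiv X Y → FlowEquiv Y Z → FlowEquiv X Z

/-- The full shift on `k` symbols (realized on the alphabet `{0, …, k-1}`). -/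
def fullShift (k : ℕ) : Set Seq := {x | ∀ i, x i < k}

/-- `X` is a shift of finite type. -/
def IsSFT (X : Set Seq) : Prop := ∃ F : Set (List ℕ), F.Finite ∧ X = XF F

/-- `X` is an `n`-step shift of finite type:  `X = X_F` for a finite set `F` of
forbidden words of length `n+1`. -/
def IsNStepSFT (X : Set Seq) (n : ℕ) : Prop :=
  ∃ F : Set (List ℕ), F.Finite ∧ (∀ w ∈ F, w.length = n + 1) ∧ X = XF F

/-- Irreducibility of a shift space. -/
def IsIrreducibleShift (X : Set Seq) : Prop :=
  ∀ u ∈ lang X, ∀ w ∈ lang X, ∃ v ∈ lang X, u ++ v ++ w ∈ lang X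

/-! ### Labelled graphs and sofic shifts -/

/-- A labelled directed graph over the ambient alphabet `ℕ`. -/
structure LGraph where
  V : Type
  E : Type
  src : E → V
  tgt : E → V
  lab : E → ℕ

namespace LGraph

/-- Biinfinite edge paths in `G`. -/
def paths (G : LGraph) : Set (ℤ → G.E) := {e | ∀ i : ℤ, G.tgt (e i) = G.src (e (i + 1))}

/-- The label sequence of a biinfinite edge path. -/
def labelMap (G : LGraph) (e : ℤ → G.E) : Seq := fun i => G.lab (e i)

/-- The shift space presented by the labelled graph `G`: label sequences of
biinfinite edge paths. -/
def presents (G : LGraph) : Set Seq := {y | ∃ e ∈ G.paths, G.labelMap e = y}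

/-- No vertex emits two distinct edges with the same label. -/
def RightResolving (G : LGraph) : Prop :=
  ∀ e f : G.E, G.src e = G.src f → G.lab e = G.lab f → e = f

/-- The graph is strongly connected (irreducible). -/
def StronglyConnected (G : LGraph) : Prop :=
  ∀ u v : G.V, Relation.ReflTransGen (fun a b => ∃ e : G.E, G.src e = a ∧ G.tgt e = b) u v

/-- The follower set of a vertex: label sequences of right-infinite paths
starting at that vertex. -/
def follower (G : LGraph) (v : G.V) : Set (ℕ → ℕ) :=
  {y | ∃ e : ℕ → G.E, G.src (e 0) = v ∧ (∀ i : ℕ, G.tgt (e i) = G.src (e (i + 1))) ∧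
    ∀ i : ℕ, y i = G.lab (e i)}

/-- Distinct vertices have distinct follower sets. -/
def FollowerSeparated (G : LGraph) : Prop :=
  ∀ u v : G.V, G.follower u = G.follower v → u = v

end LGraph

/-- A shift space is sofic iff it is presented by some finite labelled graph. -/
def IsSofic (X : Set Seq) : Prop :=
  ∃ G : LGraph, Finite G.V ∧ Finite G.E ∧ G.presents = X

/-! ### Rays and predecessor sets -/

/-- Right rays of `X`, encoded as `u : ℕ → ℕ` with `u k = x_k`. -/
def rayPlus (X : Set Seq) : Set (ℕ → ℕ) := {u | ∃ x ∈ X, ∀ k : ℕ, x (k : ℤ) = u k}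

/-- Left rays of `X`, encoded as `u : ℕ → ℕ` with `u k = x_{-(k+1)}`. -/
def rayMinus (X : Set Seq) : Set (ℕ → ℕ) :=
  {u | ∃ x ∈ X, ∀ k : ℕ, x (-((k : ℤ) + 1)) = u k}

/-- The biinfinite sequence `y⁻ x⁺` obtained by gluing a left ray `u` and a
right ray `v` at the origin. -/
def glue (u v : ℕ → ℕ) : Seq := fun i => if 0 ≤ i then v i.toNat else u (-(i + 1)).toNat

/-- The predecessor set `P∞(x⁺) = {y⁻ ∈ X⁻ : y⁻ x⁺ ∈ X}` of a right ray. -/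
def predInf (X : Set Seq) (v : ℕ → ℕ) : Set (ℕ → ℕ) := {u | glue u v ∈ X}

/-- The left ray `y⁻ w` obtained by appending the word `w` to the left ray `u`. -/
def snocWord (u : ℕ → ℕ) (w : List ℕ) : ℕ → ℕ := fun k =>
  if h : k < w.length then w.get ⟨w.length - 1 - k, by omega⟩ else u (k - w.length)

/-- The predecessor set `P∞(w) = {y⁻ ∈ X⁻ : y⁻ w ∈ X⁻}` of a word. -/
def predWord (X : Set Seq) (w : List ℕ) : Set (ℕ → ℕ) := {u | snocWord u w ∈ rayMinus X}

/-- The right ray `v x⁺` obtained by prepending the word `v` to the right ray `u`. -/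
def consRay (v : List ℕ) (u : ℕ → ℕ) : ℕ → ℕ := fun k =>
  if h : k < v.length then v.get ⟨k, h⟩ else u (k - v.length)

/-- `P_l(w)`: words `v` of length at most `l` with `v w ∈ B(X)`. -/
def predLWord (X : Set Seq) (l : ℕ) (w : List ℕ) : Set (List ℕ) :=
  {v | v ∈ lang X ∧ v.length ≤ l ∧ v ++ w ∈ lang X}

/-- `P_l(x⁺)`: words `v` of length at most `l` with `v x⁺ ∈ X⁺`. -/
def predLRay (X : Set Seq) (l : ℕ) (u : ℕ → ℕ) : Set (List ℕ) :=
  {v | v ∈ lang X ∧ v.length ≤ l ∧ consRay v u ∈ rayPlus X}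

/-- The edge relation of the past set cover of `X`: an edge labelled `a` from
`P` to `P'` whenever there is a nonempty word `w ∈ B(X)` with `a w ∈ B(X)`,
`P = P∞(a w)` and `P' = P∞(w)`. -/
def pscEdge (X : Set Seq) (P P' : Set (ℕ → ℕ)) : Prop :=
  ∃ (a : ℕ) (w : List ℕ), w ≠ [] ∧ w ∈ lang X ∧ (a :: w) ∈ lang X ∧
    P = predWord X (a :: w) ∧ P' = predWord X w

/-- The vertex set of the maximal essential subgraph of the past set cover: the
vertices lying on a biinfinite path in the past set cover. -/
def pscEssential (X : Set Seq) : Set (Set (ℕ → ℕ)) :=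
  {P | ∃ Q : ℤ → Set (ℕ → ℕ), Q 0 = P ∧ ∀ i : ℤ, pscEdge X (Q i) (Q (i + 1))}

/-- Condition (∗) of Carlsen and Matsumoto. -/
def ConditionStar (X : Set Seq) : Prop :=
  ∀ (l : ℕ) (F : Set (List ℕ)), F.Infinite → F ⊆ lang X →
    (∀ u ∈ F, ∀ v ∈ F, predLWord X l u = predLWord X l v) →
    ∃ u ∈ rayPlus X, ∀ w ∈ F, predLWord X l w = predLRay X l u

-- ===AUX START===

section Statement9Aux

open Classical

/-! #### Combinatorial auxiliaries -/

lemma aux_pigeon {α β : Type*} {s : Set α} (hs : s.Infinite) (f : α → β)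
    (hf : {b | ∃ a ∈ s, f a = b}.Finite) : ∃ b, {a | a ∈ s ∧ f a = b}.Infinite := by
  by_contra h
  push_neg at h
  have hsub : s ⊆ ⋃ b ∈ {b | ∃ a ∈ s, f a = b}, {a | a ∈ s ∧ f a = b} := by
    intro a ha; exact Set.mem_biUnion ⟨a, ha, rfl⟩ ⟨ha, rfl⟩
  exact hs ((hf.biUnion (fun b _ => h b)).subset hsub)

lemma aux_ge {s : Set ℕ} (hs : s.Infinite) (m : ℕ) : ∃ n ∈ s, m ≤ n := by
  by_contra h; push_neg at h
  exact hs ((Set.finite_Iio m).subset fun n hn => h n hn)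

lemma aux_diag {F : Type*} [Finite F] (x : ℕ → ℤ → F) :
    ∃ y : ℤ → F, ∀ m : ℕ, ∃ n, m ≤ n ∧ ∀ i : ℤ, i.natAbs ≤ m → x n i = y i := by
  classical
  have step : ∀ (s : Set ℕ), s.Infinite → ∀ m : ℕ, ∃ t : Set ℕ, t ⊆ s ∧ t.Infinite ∧
      ∀ n ∈ t, ∀ n' ∈ t, ∀ i : ℤ, i.natAbs ≤ m → x n i = x n' i := by
    intro s hs m
    obtain ⟨b, hb⟩ := aux_pigeon hs (fun n => (fun i : Finset.Icc (-(m:ℤ)) m => x n i.1))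
      (Set.toFinite _)
    refine ⟨_, fun a ha => ha.1, hb, ?_⟩
    intro n hn n' hn' i hi
    have hmem : i ∈ Finset.Icc (-(m:ℤ)) m := by rw [Finset.mem_Icc]; omega
    exact congrFun (hn.2.trans hn'.2.symm) ⟨i, hmem⟩
  choose T hT1 hT2 hT3 using step
  let S : ℕ → {s : Set ℕ // s.Infinite} := fun m => Nat.rec ⟨Set.univ, Set.infinite_univ⟩
      (fun m prev => ⟨T prev.1 prev.2 m, hT2 prev.1 prev.2 m⟩) m
  have hstep : ∀ m, (S (m+1)).1 ⊆ (S m).1 := fun m => hT1 _ _ m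
  have hmono : ∀ k m : ℕ, k ≤ m → (S m).1 ⊆ (S k).1 := by
    intro k m hkm
    induction m with
    | zero => have hk0 : k = 0 := by omega
              subst hk0; exact subset_rfl
    | succ m ih =>
      rcases Nat.eq_or_lt_of_le hkm with h|h
      · subst h; exact subset_rfl
      · exact fun a ha => ih (by omega) (hstep m ha)
  have hagree : ∀ m, ∀ n ∈ (S (m+1)).1, ∀ n' ∈ (S (m+1)).1,
      ∀ i : ℤ, i.natAbs ≤ m → x n i = x n' i := fun m => hT3 (S m).1 (S m).2 m
  have hne : ∀ m, ∃ a, a ∈ (S m).1 := fun m => (S m).2.nonempty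
  choose pick hpick using hne
  refine ⟨fun i => x (pick (i.natAbs + 1)) i, ?_⟩
  intro m
  obtain ⟨n, hn, hnge⟩ := aux_ge (S (m+1)).2 m
  refine ⟨n, hnge, ?_⟩
  intro i hi
  have h1 : n ∈ (S (i.natAbs+1)).1 := hmono (i.natAbs+1) (m+1) (by omega) hn
  exact hagree i.natAbs n h1 (pick (i.natAbs+1)) (hpick (i.natAbs+1)) i le_rfl

/-! #### Words read leftwards / rightwards from rays -/

/-- The word formed by the last `n` letters of a left ray `u` (read left to right). -/
def lword (u : ℕ → ℕ) (n : ℕ) : List ℕ := List.ofFn fun k : Fin n => u (n - 1 - k)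

/-- The word formed by the first `n` letters of a right ray `u`. -/
def rword (u : ℕ → ℕ) (n : ℕ) : List ℕ := List.ofFn fun k : Fin n => u k

@[simp] lemma lword_length (u : ℕ → ℕ) (n : ℕ) : (lword u n).length = n :=
  List.length_ofFn
@[simp] lemma rword_length (u : ℕ → ℕ) (n : ℕ) : (rword u n).length = n :=
  List.length_ofFn
@[simp] lemma wordAt_length (x : Seq) (i : ℤ) (n : ℕ) : (wordAt x i n).length = n :=
  List.length_ofFn

@[simp] lemma lword_zero (u : ℕ → ℕ) : lword u 0 = [] := rfl
@[simp] lemma rword_zero (u : ℕ → ℕ) : rword u 0 = [] := rfl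

lemma lword_getD (u : ℕ → ℕ) {n k : ℕ} (hk : k < n) :
    (lword u n).getD k 0 = u (n - 1 - k) := by
  rw [List.getD_eq_getElem _ _ (by simpa using hk)]
  simp [lword]

lemma rword_getD (u : ℕ → ℕ) {n k : ℕ} (hk : k < n) :
    (rword u n).getD k 0 = u k := by
  rw [List.getD_eq_getElem _ _ (by simpa using hk)]
  simp [rword]

lemma wordAt_getD (x : Seq) (i : ℤ) {n k : ℕ} (hk : k < n) :
    (wordAt x i n).getD k 0 = x (i + k) := by
  rw [List.getD_eq_getElem _ _ (by simpa using hk)]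
  simp [wordAt]

lemma getD_ext {l l' : List ℕ} (hlen : l.length = l'.length)
    (h : ∀ k, k < l.length → l.getD k 0 = l'.getD k 0) : l = l' := by
  apply List.ext_getElem hlen
  intro k h1 h2
  have := h k h1
  rwa [List.getD_eq_getElem _ _ h1, List.getD_eq_getElem _ _ h2] at this

lemma getD_append_left {l l' : List ℕ} {k : ℕ} (hk : k < l.length) :
    (l ++ l').getD k 0 = l.getD k 0 := by
  rw [List.getD_eq_getElem _ _ (by simp; omega), List.getD_eq_getElem _ _ hk]
  exact List.getElem_append_left hk
lemma getD_append_right {l l' : List ℕ} {k : ℕ} (hk : l.length ≤ k) (hk' : k < l.length + l'.length) :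
    (l ++ l').getD k 0 = l'.getD (k - l.length) 0 := by
  rw [List.getD_eq_getElem _ _ (by simp; omega), List.getD_eq_getElem _ _ (by omega)]
  exact List.getElem_append_right hk

lemma wordAt_append (x : Seq) (i : ℤ) (n m : ℕ) :
    wordAt x i (n + m) = wordAt x i n ++ wordAt x (i + n) m := by
  apply getD_ext (by simp)
  intro k hk
  simp only [wordAt_length] at hk
  rw [wordAt_getD x i hk]
  by_cases h : k < n
  · rw [getD_append_left (by simpa using h), wordAt_getD x i h]
  · rw [getD_append_right (by simp; omega) (by simp; omega)]
    simp only [wordAt_length]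
    rw [wordAt_getD x (i + n) (by omega)]
    congr 1
    omega

lemma wordAt_translate (x : Seq) (d i : ℤ) (n : ℕ) :
    wordAt (fun t => x (t + d)) i n = wordAt x (i + d) n := by
  apply getD_ext (by simp)
  intro k hk
  simp only [wordAt_length] at hk
  rw [wordAt_getD _ _ hk, wordAt_getD _ _ hk]
  congr 1
  ring

/-! #### snocWord / consRay / glue pointwise lemmas -/

lemma snocWord_lt (u : ℕ → ℕ) (w : List ℕ) {k : ℕ} (hk : k < w.length) :
    snocWord u w k = w.getD (w.length - 1 - k) 0 := by
  rw [snocWord, dif_pos hk, List.getD_eq_getElem _ _ (by omega)]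
  rfl

lemma snocWord_ge (u : ℕ → ℕ) (w : List ℕ) {k : ℕ} (hk : w.length ≤ k) :
    snocWord u w k = u (k - w.length) := by
  rw [snocWord, dif_neg (by omega)]

lemma consRay_lt (g : List ℕ) (v : ℕ → ℕ) {k : ℕ} (hk : k < g.length) :
    consRay g v k = g.getD k 0 := by
  rw [consRay, dif_pos hk, List.getD_eq_getElem _ _ hk]
  rfl

lemma consRay_ge (g : List ℕ) (v : ℕ → ℕ) {k : ℕ} (hk : g.length ≤ k) :
    consRay g v k = v (k - g.length) := by
  rw [consRay, dif_neg (by omega)]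

lemma glue_nonneg (u v : ℕ → ℕ) (k : ℕ) : glue u v (k : ℤ) = v k := by
  rw [glue]; simp

lemma glue_neg (u v : ℕ → ℕ) (k : ℕ) : glue u v (-((k:ℤ) + 1)) = u k := by
  rw [glue]
  have h1 : ¬ (0 ≤ -((k:ℤ)+1)) := by omega
  rw [if_neg h1]
  congr 1
  omega

lemma lword_snocWord_big (u : ℕ → ℕ) (w : List ℕ) (n : ℕ) :
    lword (snocWord u w) (n + w.length) = lword u n ++ w := by
  apply getD_ext (by simp)
  intro k hk
  simp only [lword_length] at hk
  rw [lword_getD _ hk]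
  by_cases h : k < n
  · rw [getD_append_left (by simpa using h), lword_getD _ h,
      snocWord_ge _ _ (by omega)]
    congr 1
    omega
  · rw [getD_append_right (by simpa using h) (by simp; omega),
      snocWord_lt _ _ (by omega)]
    simp only [lword_length]
    congr 1
    omega

lemma lword_snocWord_small (u : ℕ → ℕ) (w : List ℕ) {k : ℕ} (hk : k ≤ w.length) :
    lword (snocWord u w) k = w.drop (w.length - k) := by
  apply getD_ext (by simp only [lword_length, List.length_drop]; omega)
  intro j hj
  simp only [lword_length] at hj
  rw [lword_getD _ hj, snocWord_lt _ _ (by omega),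
    List.getD_eq_getElem _ _ (by omega),
    List.getD_eq_getElem _ _ (by simp only [List.length_drop]; omega), List.getElem_drop]
  congr 1
  omega

lemma rword_consRay (g : List ℕ) (v : ℕ → ℕ) (m : ℕ) :
    rword (consRay g v) (g.length + m) = g ++ rword v m := by
  apply getD_ext (by simp)
  intro k hk
  simp only [rword_length] at hk
  rw [rword_getD _ hk]
  by_cases h : k < g.length
  · rw [getD_append_left h, consRay_lt _ _ h]
  · rw [getD_append_right (by omega) (by simp; omega), consRay_ge _ _ (by omega),
      rword_getD _ (by omega)]

lemma rword_succ (u : ℕ → ℕ) (m : ℕ) : rword u (m + 1) = rword u m ++ [u m] := by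
  apply getD_ext (by simp)
  intro k hk
  simp only [rword_length] at hk
  rw [rword_getD _ hk]
  by_cases h : k < m
  · rw [getD_append_left (by simpa using h), rword_getD _ h]
  · have hkm : k = m := by omega
    subst hkm
    rw [getD_append_right (by simp) (by simp)]
    simp

lemma rword_cons (u : ℕ → ℕ) (m : ℕ) :
    rword u (m + 1) = u 0 :: rword (fun k => u (k + 1)) m := by
  have : u 0 :: rword (fun k => u (k+1)) m = [u 0] ++ rword (fun k => u (k+1)) m := rfl
  rw [this]
  apply getD_ext (by simp)
  intro k hk
  simp only [rword_length] at hk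
  rw [rword_getD _ hk]
  by_cases h : k < 1
  · have : k = 0 := by omega
    subst this
    rw [getD_append_left (by simp)]
    simp
  · rw [getD_append_right (by simp; omega) (by simp; omega), rword_getD _ (by simp; omega)]
    simp only [List.length_cons, List.length_nil]
    congr 1
    omega

lemma lword_eq_wordAt {x : Seq} {u : ℕ → ℕ} (h : ∀ k : ℕ, x (-((k:ℤ)+1)) = u k) (n : ℕ) :
    lword u n = wordAt x (-(n:ℤ)) n := by
  apply getD_ext (by simp)
  intro k hk
  simp only [lword_length] at hk
  rw [lword_getD _ hk, wordAt_getD _ _ hk, ← h (n - 1 - k)]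
  congr 1
  omega

lemma rword_eq_wordAt {x : Seq} {u : ℕ → ℕ} (h : ∀ k : ℕ, x (k:ℤ) = u k) (n : ℕ) :
    rword u n = wordAt x 0 n := by
  apply getD_ext (by simp)
  intro k hk
  simp only [rword_length] at hk
  rw [rword_getD _ hk, wordAt_getD _ _ hk, ← h k]
  congr 1
  omega

/-! #### Consequences of a finite presentation -/

namespace LGraph
variable (G : LGraph)

lemma presents_translate {x : Seq} (hx : x ∈ G.presents) (d : ℤ) :
    (fun i => x (i + d)) ∈ G.presents := by
  obtain ⟨e, he, hlab⟩ := hx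
  refine ⟨fun i => e (i + d), fun i => ?_, ?_⟩
  · show G.tgt (e (i + d)) = G.src (e (i + 1 + d))
    rw [show i + 1 + d = i + d + 1 by ring]
    exact he (i + d)
  · funext i
    exact congrFun hlab (i + d)

lemma presents_letter {x : Seq} (hx : x ∈ G.presents) (i : ℤ) : x i ∈ Set.range G.lab := by
  obtain ⟨e, -, hlab⟩ := hx
  exact ⟨e i, congrFun hlab i⟩

lemma presents_limit [Finite G.E] (y : ℕ → Seq) (hy : ∀ n, y n ∈ G.presents) :
    ∃ z ∈ G.presents, ∀ m : ℕ, ∃ n, m ≤ n ∧ ∀ i : ℤ, i.natAbs ≤ m → y n i = z i := by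
  have h2 : ∀ n, ∃ e ∈ G.paths, G.labelMap e = y n := hy
  choose es hes hlab using h2
  obtain ⟨e, he⟩ := aux_diag es
  refine ⟨G.labelMap e, ⟨e, ?_, rfl⟩, ?_⟩
  · intro i
    obtain ⟨n, hn, ha⟩ := he (i.natAbs + 1)
    rw [← ha i (by omega), ← ha (i+1) (by omega)]
    exact hes n i
  · intro m
    obtain ⟨n, hn, ha⟩ := he m
    refine ⟨n, hn, fun i hi => ?_⟩
    rw [← hlab n]
    show G.lab (es n i) = G.lab (e i)
    rw [ha i hi]

lemma presents_close [Finite G.E] {y : Seq}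
    (h : ∀ m : ℕ, ∃ x ∈ G.presents, ∀ i : ℤ, i.natAbs ≤ m → x i = y i) :
    y ∈ G.presents := by
  choose xs hxs hag using h
  obtain ⟨z, hz, hzag⟩ := G.presents_limit xs hxs
  have hyz : y = z := by
    funext i
    obtain ⟨n, hn, ha⟩ := hzag i.natAbs
    rw [← ha i le_rfl]
    exact (hag n i (by omega)).symm
  rwa [hyz]

/-! #### The language of a presented shift -/

lemma wordAt_mem_lang {x : Seq} (hx : x ∈ G.presents) (i : ℤ) (n : ℕ) :
    wordAt x i n ∈ lang G.presents :=
  ⟨x, hx, i, by rw [wordAt_length]⟩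

lemma occAt {w : List ℕ} (hw : w ∈ lang G.presents) (j : ℤ) :
    ∃ x ∈ G.presents, wordAt x j w.length = w := by
  obtain ⟨x, hx, i, hocc⟩ := hw
  refine ⟨fun t => x (t + (i - j)), G.presents_translate hx (i - j), ?_⟩
  rw [wordAt_translate, show j + (i - j) = i by ring]
  exact hocc

lemma lang_append {u v : List ℕ} (h : u ++ v ∈ lang G.presents) :
    u ∈ lang G.presents ∧ v ∈ lang G.presents := by
  obtain ⟨x, hx, i, hocc⟩ := h
  rw [List.length_append, wordAt_append] at hocc
  obtain ⟨h1, h2⟩ := List.append_inj hocc (by simp)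
  exact ⟨h1 ▸ G.wordAt_mem_lang hx i u.length,
    h2 ▸ G.wordAt_mem_lang hx (i + u.length) v.length⟩

lemma lang_drop {w : List ℕ} (h : w ∈ lang G.presents) (j : ℕ) :
    w.drop j ∈ lang G.presents := by
  rw [← List.take_append_drop j w] at h
  exact (G.lang_append h).2

lemma lang_take {w : List ℕ} (h : w ∈ lang G.presents) (j : ℕ) :
    w.take j ∈ lang G.presents := by
  rw [← List.take_append_drop j w] at h
  exact (G.lang_append h).1

lemma lang_extend_left {w : List ℕ} (h : w ∈ lang G.presents) :
    ∃ a, a :: w ∈ lang G.presents := by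
  obtain ⟨x, hx, hocc⟩ := G.occAt h 0
  refine ⟨x (-1), ?_⟩
  have h1 : wordAt x (-1) 1 = [x (-1)] := by
    apply getD_ext (by simp)
    intro k hk
    simp only [wordAt_length] at hk
    have hk0 : k = 0 := by omega
    subst hk0
    rw [wordAt_getD _ _ hk]
    simp
  have hw : wordAt x (-1) (1 + w.length) = x (-1) :: w := by
    rw [wordAt_append, h1, show (-1 : ℤ) + (1:ℕ) = 0 by norm_num, hocc]
    rfl
  have hmem := G.wordAt_mem_lang hx (-1) (1 + w.length)
  rwa [hw] at hmem

lemma lang_letters {w : List ℕ} (h : w ∈ lang G.presents) {c : ℕ} (hc : c ∈ w) :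
    c ∈ Set.range G.lab := by
  obtain ⟨x, hx, i, hocc⟩ := h
  obtain ⟨k, hk, hgetc⟩ := List.mem_iff_getElem.mp hc
  have h1 := wordAt_getD x i (n := w.length) hk
  rw [hocc, List.getD_eq_getElem _ _ hk, hgetc] at h1
  exact h1 ▸ G.presents_letter hx (i + k)

lemma lang_length_le_finite [Finite G.E] (n : ℕ) :
    {w | w ∈ lang G.presents ∧ w.length ≤ n}.Finite := by
  have hA : (Set.range G.lab).Finite := Set.finite_range _
  have key : ∀ n : ℕ,
      {w : List ℕ | (∀ c ∈ w, c ∈ Set.range G.lab) ∧ w.length ≤ n}.Finite := by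
    intro n
    induction n with
    | zero =>
      refine (Set.finite_singleton []).subset ?_
      rintro w ⟨-, hlen⟩
      simp [List.length_eq_zero_iff.mp (Nat.le_zero.mp hlen)]
    | succ n ih =>
      refine ((hA.image2 List.cons ih).insert []).subset ?_
      rintro w ⟨hc, hlen⟩
      match w with
      | [] => exact Set.mem_insert _ _
      | a :: t =>
        refine Set.mem_insert_of_mem _ (Set.mem_image2_of_mem (hc a (by simp)) ?_)
        exact ⟨fun c hct => hc c (by simp [hct]), by simpa using hlen⟩
  refine (key n).subset ?_
  rintro w ⟨hw, hlen⟩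
  exact ⟨fun c hc => G.lang_letters hw hc, hlen⟩

lemma lang_unbounded [Finite G.E] {F : Set (List ℕ)} (hF : F.Infinite)
    (hFL : F ⊆ lang G.presents) (N : ℕ) : ∃ w ∈ F, N ≤ w.length := by
  by_contra h
  push_neg at h
  exact hF ((G.lang_length_le_finite N).subset fun w hw => ⟨hFL hw, (h w hw).le⟩)

/-! #### Rays and predecessor sets via the language -/

lemma rayMinus_iff [Finite G.E] (u : ℕ → ℕ) :
    u ∈ rayMinus G.presents ↔ ∀ n, lword u n ∈ lang G.presents := by
  constructor
  · rintro ⟨x, hx, hxu⟩ n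
    rw [lword_eq_wordAt hxu n]
    exact G.wordAt_mem_lang hx _ _
  · intro h
    have hx : ∀ n : ℕ, ∃ x ∈ G.presents, wordAt x (-(n:ℤ)) n = lword u n := by
      intro n
      obtain ⟨x, hx, hw⟩ := G.occAt (h n) (-(n:ℤ))
      rw [lword_length] at hw
      exact ⟨x, hx, hw⟩
    choose xs hxs hws using hx
    obtain ⟨z, hz, hag⟩ := G.presents_limit xs hxs
    refine ⟨z, hz, fun k => ?_⟩
    obtain ⟨n, hn, ha⟩ := hag (k+1)
    rw [← ha (-((k:ℤ)+1)) (by omega)]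
    have h1 := wordAt_getD (xs n) (-(n:ℤ)) (show n - 1 - k < n by omega)
    rw [hws n, lword_getD _ (show n - 1 - k < n by omega),
      show n - 1 - (n - 1 - k) = k by omega] at h1
    rw [h1]
    congr 1
    omega

lemma rayPlus_iff [Finite G.E] (u : ℕ → ℕ) :
    u ∈ rayPlus G.presents ↔ ∀ n, rword u n ∈ lang G.presents := by
  constructor
  · rintro ⟨x, hx, hxu⟩ n
    rw [rword_eq_wordAt hxu n]
    exact G.wordAt_mem_lang hx _ _
  · intro h
    have hx : ∀ n : ℕ, ∃ x ∈ G.presents, wordAt x 0 n = rword u n := by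
      intro n
      obtain ⟨x, hx, hw⟩ := G.occAt (h n) 0
      rw [rword_length] at hw
      exact ⟨x, hx, hw⟩
    choose xs hxs hws using hx
    obtain ⟨z, hz, hag⟩ := G.presents_limit xs hxs
    refine ⟨z, hz, fun k => ?_⟩
    obtain ⟨n, hn, ha⟩ := hag (k+1)
    rw [← ha (k:ℤ) (by omega)]
    have h1 := wordAt_getD (xs n) 0 (show k < n by omega)
    rw [hws n, rword_getD _ (show k < n by omega)] at h1
    rw [h1]
    norm_num

lemma predWord_iff [Finite G.E] (y : ℕ → ℕ) (w : List ℕ) :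
    y ∈ predWord G.presents w ↔ ∀ n, lword y n ++ w ∈ lang G.presents := by
  rw [predWord, Set.mem_setOf_eq, G.rayMinus_iff]
  constructor
  · intro h n
    have h2 := h (n + w.length)
    rwa [lword_snocWord_big] at h2
  · intro h n
    by_cases hn : n ≤ w.length
    · rw [lword_snocWord_small _ _ hn]
      have h0 := h 0
      rw [lword_zero, List.nil_append] at h0
      exact G.lang_drop h0 _
    · have h2 := h (n - w.length)
      rw [← lword_snocWord_big y w (n - w.length)] at h2
      rwa [show n - w.length + w.length = n by omega] at h2

lemma predInf_iff [Finite G.E] (y v : ℕ → ℕ) :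
    y ∈ predInf G.presents v ↔ ∀ n m : ℕ, lword y n ++ rword v m ∈ lang G.presents := by
  rw [predInf, Set.mem_setOf_eq]
  constructor
  · intro h n m
    have h1 : lword y n = wordAt (glue y v) (-(n:ℤ)) n :=
      lword_eq_wordAt (fun k => glue_neg y v k) n
    have h2 : rword v m = wordAt (glue y v) 0 m :=
      rword_eq_wordAt (fun k => glue_nonneg y v k) m
    have h3 := wordAt_append (glue y v) (-(n:ℤ)) n m
    rw [show -(n:ℤ) + (n:ℕ) = 0 by norm_num] at h3
    rw [h1, h2, ← h3]
    exact G.wordAt_mem_lang h _ _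
  · intro h
    apply G.presents_close
    intro m
    obtain ⟨x, hx, hocc⟩ := G.occAt (h (m+1) (m+1)) (-((m:ℤ)+1))
    rw [List.length_append, lword_length, rword_length, wordAt_append] at hocc
    obtain ⟨h1, h2⟩ := List.append_inj hocc (by simp)
    rw [show -((m:ℤ)+1) + ((m+1 : ℕ):ℤ) = 0 by push_cast; ring] at h2
    refine ⟨x, hx, fun i hi => ?_⟩
    by_cases hpos : 0 ≤ i
    · obtain ⟨k, rfl⟩ := Int.eq_ofNat_of_zero_le hpos
      rw [glue_nonneg]
      have hkm : k < m + 1 := by omega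
      have h4 := wordAt_getD x 0 (n := m+1) hkm
      rw [h2, rword_getD _ hkm] at h4
      rw [h4]
      norm_num
    · have hex : ∃ k : ℕ, i = -((k:ℤ)+1) ∧ k < m + 1 := ⟨(-(i+1)).toNat, by omega, by omega⟩
      obtain ⟨k, rfl, hkm⟩ := hex
      rw [glue_neg]
      have h4 := wordAt_getD x (-((m:ℤ)+1)) (n := m+1) (show m - k < m + 1 by omega)
      rw [h1, lword_getD _ (show m - k < m + 1 by omega),
        show m + 1 - 1 - (m - k) = k by omega] at h4
      rw [h4]
      congr 1
      omega

lemma consRay_mem_iff [Finite G.E] (g : List ℕ) (v : ℕ → ℕ) :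
    consRay g v ∈ rayPlus G.presents ↔ ∀ m, g ++ rword v m ∈ lang G.presents := by
  rw [G.rayPlus_iff]
  constructor
  · intro h m
    have h2 := h (g.length + m)
    rwa [rword_consRay] at h2
  · intro h n
    by_cases hn : n ≤ g.length
    · have h0 := h 0
      rw [rword_zero, List.append_nil] at h0
      have htake : rword (consRay g v) n = g.take n := by
        apply getD_ext (by simp only [rword_length, List.length_take]; omega)
        intro k hk
        simp only [rword_length] at hk
        rw [rword_getD _ hk, consRay_lt _ _ (by omega), List.getD_eq_getElem _ _ (by omega),
          List.getD_eq_getElem _ _ (by simp only [List.length_take]; omega),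
          List.getElem_take]
      rw [htake]
      exact G.lang_take h0 n
    · have h2 := h (n - g.length)
      rw [← rword_consRay g v (n - g.length)] at h2
      rwa [show g.length + (n - g.length) = n by omega] at h2

end LGraph

namespace LGraph
variable (G : LGraph)

lemma exists_leftRay {g w : List ℕ} (h : g ++ w ∈ lang G.presents) :
    ∃ y : ℕ → ℕ, lword y g.length = g ∧ ∀ n, lword y n ++ w ∈ lang G.presents := by
  obtain ⟨x, hx, hocc⟩ := G.occAt h (-(((g.length + w.length) : ℕ) : ℤ))
  rw [List.length_append, wordAt_append] at hocc
  obtain ⟨h1, h2⟩ := List.append_inj hocc (by simp)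
  set d : ℤ := -(w.length : ℤ) with hd
  have hdval : d = -(((g.length + w.length : ℕ)):ℤ) + ((g.length:ℕ):ℤ) := by
    rw [hd]; push_cast; ring
  have h2' : wordAt x d w.length = w := by rw [hdval]; exact h2
  refine ⟨fun k => x (-((k:ℤ)+1) + d), ?_, ?_⟩
  · have hA := lword_eq_wordAt (x := fun t => x (t + d))
      (u := fun k => x (-((k:ℤ)+1) + d)) (fun k => rfl) g.length
    rw [wordAt_translate] at hA
    rw [hA, show -((g.length:ℕ):ℤ) + d = -(((g.length + w.length : ℕ)):ℤ) by rw [hd]; push_cast; ring]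
    exact h1
  · intro n
    have hA := lword_eq_wordAt (x := fun t => x (t + d))
      (u := fun k => x (-((k:ℤ)+1) + d)) (fun k => rfl) n
    rw [wordAt_translate] at hA
    have hap := wordAt_append x (-(n:ℤ) + d) n w.length
    rw [show -(n:ℤ) + d + ((n:ℕ):ℤ) = d by push_cast; ring] at hap
    have hfull : wordAt x (-(n:ℤ) + d) (n + w.length) = wordAt x (-(n:ℤ) + d) n ++ w := by
      rw [hap, h2']
    rw [hA, ← hfull]
    exact G.wordAt_mem_lang hx _ _

lemma lang_iff_predWord_nonempty [Finite G.E] (w : List ℕ) :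
    w ∈ lang G.presents ↔ (predWord G.presents w).Nonempty := by
  constructor
  · intro h
    obtain ⟨y, -, hy⟩ := G.exists_leftRay (g := []) (by simpa using h)
    exact ⟨y, (G.predWord_iff y w).mpr hy⟩
  · rintro ⟨y, hy⟩
    have h0 := (G.predWord_iff y w).mp hy 0
    simpa using h0

lemma predWord_cons_congr [Finite G.E] {u u' : List ℕ}
    (h : predWord G.presents u = predWord G.presents u') (a : ℕ) :
    predWord G.presents (a :: u) = predWord G.presents (a :: u') := by
  have key : ∀ (v v' : List ℕ), predWord G.presents v = predWord G.presents v' →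
      ∀ y, y ∈ predWord G.presents (a :: v) → y ∈ predWord G.presents (a :: v') := by
    intro v v' hvv' y hy
    rw [G.predWord_iff] at hy
    have hsnoc : ∀ n, lword (snocWord y [a]) (n+1) = lword y n ++ [a] := by
      intro n
      simpa using lword_snocWord_big y [a] n
    have hmem : snocWord y [a] ∈ predWord G.presents v := by
      rw [G.predWord_iff]
      intro n
      match n with
      | 0 =>
        simp only [lword_zero, List.nil_append]
        exact (G.lang_append (u := [a]) (v := v) (by simpa using hy 0)).2
      | n+1 =>
        rw [hsnoc n, List.append_assoc]
        simpa using hy n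
    rw [hvv'] at hmem
    rw [G.predWord_iff]
    intro n
    have h2 := (G.predWord_iff _ _).mp hmem (n+1)
    rw [hsnoc n, List.append_assoc] at h2
    simpa using h2
  ext y
  exact ⟨key u u' h y, key u' u h.symm y⟩

lemma predWord_append_congr [Finite G.E] {u u' : List ℕ}
    (h : predWord G.presents u = predWord G.presents u') (g : List ℕ) :
    predWord G.presents (g ++ u) = predWord G.presents (g ++ u') := by
  induction g with
  | nil => simpa using h
  | cons a g ih => exact G.predWord_cons_congr ih a

lemma predLWord_congr [Finite G.E] {w w' : List ℕ}
    (h : predWord G.presents w = predWord G.presents w') (l : ℕ) :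
    predLWord G.presents l w = predLWord G.presents l w' := by
  have key : ∀ (v v' : List ℕ), predWord G.presents v = predWord G.presents v' →
      ∀ g ∈ predLWord G.presents l v, g ∈ predLWord G.presents l v' := by
    intro v v' hvv' g hg
    obtain ⟨hgL, hglen, hgv⟩ := hg
    obtain ⟨y, hyg, hy⟩ := G.exists_leftRay hgv
    have hyv : y ∈ predWord G.presents v := (G.predWord_iff _ _).mpr hy
    rw [hvv'] at hyv
    have h2 := (G.predWord_iff _ _).mp hyv g.length
    rw [hyg] at h2
    exact ⟨hgL, hglen, h2⟩
  ext g
  exact ⟨key w w' h g, key w' w h.symm g⟩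

lemma predLWord_eq_predLRay [Finite G.E] {w : List ℕ} {v : ℕ → ℕ}
    (h : predWord G.presents w = predInf G.presents v) (l : ℕ) :
    predLWord G.presents l w = predLRay G.presents l v := by
  ext g
  constructor
  · rintro ⟨hgL, hglen, hgw⟩
    obtain ⟨y, hyg, hy⟩ := G.exists_leftRay hgw
    have hyv : y ∈ predInf G.presents v := by
      rw [← h]
      exact (G.predWord_iff _ _).mpr hy
    have h2 := (G.predInf_iff _ _).mp hyv
    refine ⟨hgL, hglen, ?_⟩
    rw [G.consRay_mem_iff]
    intro m
    have h3 := h2 g.length m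
    rwa [hyg] at h3
  · rintro ⟨hgL, hglen, hgv⟩
    obtain ⟨x, hx, hxc⟩ := hgv
    have hx'mem : (fun t => x (t + (g.length:ℤ))) ∈ G.presents := G.presents_translate hx _
    set y : ℕ → ℕ := fun k => x (-((k:ℤ)+1) + (g.length:ℤ)) with hy
    have hglue : glue y v = fun t => x (t + (g.length:ℤ)) := by
      funext i
      by_cases hpos : 0 ≤ i
      · obtain ⟨k, rfl⟩ := Int.eq_ofNat_of_zero_le hpos
        rw [glue_nonneg]
        have e2 : ((k:ℤ) + (g.length:ℤ)) = (((k + g.length : ℕ)) : ℤ) := by push_cast; ring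
        show v k = x ((k:ℤ) + (g.length:ℤ))
        rw [e2, hxc (k + g.length), consRay_ge _ _ (by omega)]
        simp
      · have hex : ∃ k : ℕ, i = -((k:ℤ)+1) := ⟨(-(i+1)).toNat, by omega⟩
        obtain ⟨k, rfl⟩ := hex
        rw [glue_neg]
    have hyv : y ∈ predInf G.presents v := by
      rw [predInf, Set.mem_setOf_eq, hglue]
      exact hx'mem
    have hyw : y ∈ predWord G.presents w := by
      rw [h]
      exact hyv
    have hlg : lword y g.length = g := by
      apply getD_ext (by simp)
      intro k hk
      simp only [lword_length] at hk
      rw [lword_getD _ hk]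
      show x (-((↑(g.length - 1 - k) : ℤ)+1) + (g.length:ℤ)) = g.getD k 0
      have e2 : -((↑(g.length - 1 - k) : ℤ)+1) + (g.length:ℤ) = ((k:ℕ):ℤ) := by omega
      rw [e2, hxc k, consRay_lt _ _ hk]
    have h2 := (G.predWord_iff _ _).mp hyw g.length
    rw [hlg] at h2
    exact ⟨hgL, hglen, h2⟩

/-! #### Finiteness of the collection of word predecessor sets -/

/-- Vertices of `G` from which the word `w` can be read inside a biinfinite path,
the reading ending at position `0`. -/
def vSet (w : List ℕ) : Set G.V :=
  {v | ∃ e ∈ G.paths, G.src (e (-(w.length:ℤ))) = v ∧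
        wordAt (G.labelMap e) (-(w.length:ℤ)) w.length = w}

/-- Left rays that can be read along a left-infinite path ending in `S`. -/
def predOf (S : Set G.V) : Set (ℕ → ℕ) :=
  {y | ∃ e : ℕ → G.E, (∀ k, G.tgt (e (k+1)) = G.src (e k)) ∧
        (∀ k, G.lab (e k) = y k) ∧ G.tgt (e 0) ∈ S}

lemma predWord_eq_predOf (w : List ℕ) :
    predWord G.presents w = G.predOf (G.vSet w) := by
  ext y
  constructor
  · rintro ⟨x, hx, hxy⟩
    obtain ⟨e, he, hlab⟩ := hx
    have hxval : ∀ i, x i = G.lab (e i) := fun i => (congrFun hlab i).symm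
    refine ⟨fun k => e (-(w.length:ℤ) - ((k:ℤ)+1)), ?_, ?_, ?_⟩
    · intro k
      have h1 := he (-(w.length:ℤ) - ((k:ℤ)+2))
      show G.tgt (e (-(w.length:ℤ) - ((((k+1:ℕ)):ℤ)+1))) = G.src (e (-(w.length:ℤ) - ((k:ℤ)+1)))
      have e1 : -(w.length:ℤ) - (((k+1:ℕ):ℤ)+1) = -(w.length:ℤ) - ((k:ℤ)+2) := by push_cast; ring
      have e2 : -(w.length:ℤ) - ((k:ℤ)+2) + 1 = -(w.length:ℤ) - ((k:ℤ)+1) := by ring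
      rw [e1, ← e2]
      exact h1
    · intro k
      have h1 := hxy (w.length + k)
      rw [snocWord_ge _ _ (by omega)] at h1
      simp only [Nat.add_sub_cancel_left] at h1
      rw [← hxval]
      rw [show -(w.length:ℤ) - ((k:ℤ)+1) = -((↑(w.length + k):ℤ)+1) by push_cast; ring]
      exact h1
    · have h1 := he (-(w.length:ℤ) - 1)
      refine ⟨e, he, ?_, ?_⟩
      · show G.src (e (-(w.length:ℤ))) = G.tgt (e (-(w.length:ℤ) - ((((0:ℕ)):ℤ)+1)))
        rw [show -(w.length:ℤ) - ((((0:ℕ)):ℤ)+1) = -(w.length:ℤ) - 1 by push_cast; ring, h1]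
        congr 1
        ring
      · apply getD_ext (by simp)
        intro k hk
        simp only [wordAt_length] at hk
        rw [wordAt_getD _ _ hk, hlab]
        have h2 := hxy (w.length - 1 - k)
        rw [snocWord_lt _ _ (by omega), show w.length - 1 - (w.length - 1 - k) = k by omega] at h2
        rw [show -(w.length:ℤ) + (k:ℤ) = -((↑(w.length - 1 - k):ℤ)+1) by omega]
        exact h2
  · rintro ⟨e', hadj, hlabs, htgt⟩
    obtain ⟨e, he, hsrc, hword⟩ := htgt
    set f : ℤ → G.E := fun i => if -(w.length:ℤ) ≤ i then e i else e' (-(i + w.length) - 1).toNat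
      with hf
    have hfpath : f ∈ G.paths := by
      intro i
      by_cases h1 : -(w.length:ℤ) ≤ i
      · have h2 : -(w.length:ℤ) ≤ i + 1 := by omega
        show G.tgt (f i) = G.src (f (i+1))
        rw [hf]
        simp only [if_pos h1, if_pos h2]
        exact he i
      · by_cases h2 : -(w.length:ℤ) ≤ i + 1
        · have hi : i = -(w.length:ℤ) - 1 := by omega
          show G.tgt (f i) = G.src (f (i+1))
          rw [hf]
          simp only [if_neg h1, if_pos h2]
          rw [show (-(i + (w.length:ℤ)) - 1).toNat = 0 by omega, ← hsrc]
          have hiw : i + 1 = -(w.length:ℤ) := by omega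
          rw [hiw]
        · show G.tgt (f i) = G.src (f (i+1))
          rw [hf]
          simp only [if_neg h1, if_neg h2]
          have hk : ∃ k : ℕ, ((k:ℤ)) = -(i + (w.length:ℤ)) - 2 := ⟨(-(i + (w.length:ℤ)) - 2).toNat, by omega⟩
          obtain ⟨k, hkk⟩ := hk
          rw [show (-(i + (w.length:ℤ)) - 1).toNat = k + 1 by omega,
            show (-(i + 1 + (w.length:ℤ)) - 1).toNat = k by omega]
          exact hadj k
    refine ⟨G.labelMap f, ⟨f, hfpath, rfl⟩, ?_⟩
    intro k
    by_cases hk : k < w.length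
    · show G.lab (f (-((k:ℤ)+1))) = snocWord y w k
      rw [hf]
      simp only [if_pos (show -(w.length:ℤ) ≤ -((k:ℤ)+1) by omega)]
      rw [snocWord_lt _ _ hk]
      have h3 := wordAt_getD (G.labelMap e) (-(w.length:ℤ)) (show w.length - 1 - k < w.length by omega)
      rw [hword, show -(w.length:ℤ) + ((w.length - 1 - k:ℕ):ℤ) = -((k:ℤ)+1) by omega] at h3
      rw [h3]
      rfl
    · show G.lab (f (-((k:ℤ)+1))) = snocWord y w k
      rw [hf]
      simp only []
      rw [if_neg (by omega : ¬ -(w.length:ℤ) ≤ -((k:ℤ)+1))]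
      rw [show (-(-((k:ℤ)+1) + (w.length:ℤ)) - 1).toNat = k - w.length by omega]
      rw [snocWord_ge _ _ (by omega)]
      exact hlabs (k - w.length)

lemma predWord_range_finite [Finite G.V] :
    (Set.range (fun w => predWord G.presents w)).Finite := by
  have hsub : Set.range (fun w => predWord G.presents w) ⊆ Set.range G.predOf := by
    rintro P ⟨w, rfl⟩
    exact ⟨G.vSet w, (G.predWord_eq_predOf w).symm⟩
  exact (Set.finite_range _).subset hsub

end LGraph

lemma predLWord_restrict (X : Set Seq) {l L : ℕ} (h : l ≤ L) (w : List ℕ) :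
    predLWord X l w = predLWord X L w ∩ {g | g.length ≤ l} := by
  ext g
  constructor
  · rintro ⟨a, b, c⟩
    exact ⟨⟨a, by omega, c⟩, b⟩
  · rintro ⟨⟨a, b, c⟩, d⟩
    exact ⟨a, d, c⟩

namespace LGraph
variable (G : LGraph)

lemma rword_mem_lang [Finite G.E] {v : ℕ → ℕ} (hv : v ∈ rayPlus G.presents) (m : ℕ) :
    rword v m ∈ lang G.presents := (G.rayPlus_iff v).mp hv m

lemma rword_take (v : ℕ → ℕ) {m m' : ℕ} (h : m ≤ m') : (rword v m').take m = rword v m := by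
  apply getD_ext (by simp only [List.length_take, rword_length]; omega)
  intro k hk
  simp only [List.length_take, rword_length] at hk
  have hk' : k < m := by omega
  rw [List.getD_eq_getElem _ _ (by simp only [List.length_take, rword_length]; omega),
    List.getElem_take]
  have a1 := rword_getD v (show k < m' by omega)
  have a2 := rword_getD v hk'
  rw [List.getD_eq_getElem _ _ (by simp only [rword_length]; omega)] at a1
  rw [a1, a2]

lemma predWord_rword_antitone [Finite G.E] (v : ℕ → ℕ) {m m' : ℕ} (h : m ≤ m') :
    predWord G.presents (rword v m') ⊆ predWord G.presents (rword v m) := by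
  intro y hy
  rw [G.predWord_iff] at hy ⊢
  intro n
  have h2 := hy n
  rw [← List.take_append_drop m (rword v m'), rword_take v h, ← List.append_assoc] at h2
  exact (G.lang_append h2).1

lemma predInf_stab [Finite G.E] [Finite G.V] (v : ℕ → ℕ) :
    ∃ M : ℕ, ∀ m, M ≤ m → predInf G.presents v = predWord G.presents (rword v m) := by
  have hfin : ((fun m : ℕ => predWord G.presents (rword v m)) '' Set.univ).Finite := by
    apply Set.Finite.subset G.predWord_range_finite
    rintro P ⟨m, -, rfl⟩
    exact ⟨_, rfl⟩
  obtain ⟨M, -, hM⟩ := Set.Finite.exists_minimalFor'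
    (fun m : ℕ => predWord G.presents (rword v m)) Set.univ hfin ⟨0, trivial⟩
  have hconst : ∀ m, M ≤ m →
      predWord G.presents (rword v M) = predWord G.presents (rword v m) := by
    intro m hm
    exact Set.Subset.antisymm (hM trivial (G.predWord_rword_antitone v hm))
      (G.predWord_rword_antitone v hm)
  refine ⟨M, fun m hm => ?_⟩
  apply Set.eq_of_subset_of_subset
  · intro y hy
    rw [G.predWord_iff]
    intro n
    exact (G.predInf_iff y v).mp hy n m
  · intro y hy
    rw [← hconst m hm] at hy
    rw [G.predInf_iff]
    intro n m'
    have hy' : y ∈ predWord G.presents (rword v m') := by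
      by_cases h : m' ≤ M
      · exact G.predWord_rword_antitone v h hy
      · rw [← hconst m' (by omega)]
        exact hy
    exact (G.predWord_iff _ _).mp hy' n

lemma exists_sep [Finite G.E] [Finite G.V] :
    ∃ L : ℕ, ∀ w w', w ∈ lang G.presents → w' ∈ lang G.presents →
      predLWord G.presents L w = predLWord G.presents L w' →
      predWord G.presents w = predWord G.presents w' := by
  classical
  have key : ∀ w w' : List ℕ, ∀ y, y ∈ predWord G.presents w → y ∉ predWord G.presents w' →
      ∃ l, predLWord G.presents l w ≠ predLWord G.presents l w' := by
    intro w w' y hyw hyw'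
    rw [G.predWord_iff] at hyw
    have hex : ∃ n, lword y n ++ w' ∉ lang G.presents := by
      by_contra hcon
      push_neg at hcon
      exact hyw' ((G.predWord_iff _ _).mpr hcon)
    obtain ⟨n, hn⟩ := hex
    refine ⟨n, fun heq => ?_⟩
    have hmem : lword y n ∈ predLWord G.presents n w :=
      ⟨(G.lang_append (hyw n)).1, by simp, hyw n⟩
    rw [heq] at hmem
    exact hn hmem.2.2
  have hsep : ∀ w w' : List ℕ, predWord G.presents w ≠ predWord G.presents w' →
      ∃ l, predLWord G.presents l w ≠ predLWord G.presents l w' := by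
    intro w w' hne
    by_cases hss : predWord G.presents w ⊆ predWord G.presents w'
    · have hns : ¬ predWord G.presents w' ⊆ predWord G.presents w := by
        intro h2
        exact hne (Set.eq_of_subset_of_subset hss h2)
      obtain ⟨y, hy1, hy2⟩ := Set.not_subset.mp hns
      obtain ⟨l, hl⟩ := key w' w y hy1 hy2
      exact ⟨l, fun h => hl h.symm⟩
    · obtain ⟨y, hy1, hy2⟩ := Set.not_subset.mp hss
      exact key w w' y hy1 hy2
  let P : Set (ℕ → ℕ) × Set (ℕ → ℕ) → Prop := fun q =>
    ∃ l, ∃ w₁ w₁' : List ℕ, w₁ ∈ lang G.presents ∧ w₁' ∈ lang G.presents ∧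
      predWord G.presents w₁ = q.1 ∧ predWord G.presents w₁' = q.2 ∧
      predLWord G.presents l w₁ ≠ predLWord G.presents l w₁'
  let lf : Set (ℕ → ℕ) × Set (ℕ → ℕ) → ℕ := fun q => if h : P q then h.choose else 0
  have himg : (lf '' ((Set.range (fun w => predWord G.presents w)) ×ˢ
      (Set.range (fun w => predWord G.presents w)))).Finite :=
    Set.Finite.image _ (Set.Finite.prod G.predWord_range_finite G.predWord_range_finite)
  obtain ⟨L, hL⟩ := himg.bddAbove
  refine ⟨L, fun w w' hw hw' heq => ?_⟩
  by_contra hne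
  have hprop : P (predWord G.presents w, predWord G.presents w') := by
    obtain ⟨l, hl⟩ := hsep w w' hne
    exact ⟨l, w, w', hw, hw', rfl, rfl, hl⟩
  have hval : lf (predWord G.presents w, predWord G.presents w') = hprop.choose :=
    dif_pos hprop
  have hmem : lf (predWord G.presents w, predWord G.presents w') ∈
      lf '' ((Set.range (fun w => predWord G.presents w)) ×ˢ
        (Set.range (fun w => predWord G.presents w))) :=
    Set.mem_image_of_mem _ ⟨⟨w, rfl⟩, ⟨w', rfl⟩⟩
  have hle : hprop.choose ≤ L := hval ▸ hL hmem
  obtain ⟨w₁, w₁', h1, h2, h3, h4, h5⟩ := hprop.choose_spec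
  set l₀ := hprop.choose with hl₀
  have e1 : predLWord G.presents l₀ w₁ = predLWord G.presents l₀ w :=
    G.predLWord_congr h3 l₀
  have e2 : predLWord G.presents l₀ w₁' = predLWord G.presents l₀ w' :=
    G.predLWord_congr h4 l₀
  have e3 : predLWord G.presents l₀ w = predLWord G.presents l₀ w' := by
    rw [predLWord_restrict G.presents hle w, predLWord_restrict G.presents hle w', heq]
  exact h5 (by rw [e1, e2, e3])

end LGraph

/-! #### The left Krieger cover sits inside the essential past set cover -/

namespace LGraph
variable (G : LGraph)

lemma predInf_mem_essential [Finite G.E] [Finite G.V] {v : ℕ → ℕ}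
    (hv : v ∈ rayPlus G.presents) : predInf G.presents v ∈ pscEssential G.presents := by
  obtain ⟨x, hx, hxv⟩ := hv
  set t : ℤ → (ℕ → ℕ) := fun i => fun k => x (i + k) with ht
  choose M hM using fun i : ℤ => G.predInf_stab (t i)
  have hrw : ∀ i : ℤ, ∀ m : ℕ, rword (t i) m = wordAt x i m := by
    intro i m
    apply getD_ext (by simp)
    intro k hk
    simp only [rword_length] at hk
    rw [rword_getD _ hk, wordAt_getD _ _ hk]
  have hcons : ∀ i : ℤ, ∀ m : ℕ, rword (t i) (m+1) = x i :: rword (t (i+1)) m := by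
    intro i m
    rw [rword_cons]
    congr 1
    · show x (i + ((0:ℕ):ℤ)) = x i
      norm_num
    · apply getD_ext (by simp)
      intro k hk
      simp only [rword_length] at hk
      rw [rword_getD _ hk, rword_getD _ hk]
      show x (i + (((k+1 : ℕ)):ℤ)) = x ((i+1) + (k:ℕ))
      congr 1
      push_cast
      ring
  refine ⟨fun i => predInf G.presents (t i), ?_, ?_⟩
  · have htv : t 0 = v := by
      funext k
      rw [← hxv k]
      show x ((0:ℤ) + k) = x k
      norm_num
    show predInf G.presents (t 0) = predInf G.presents v
    rw [htv]
  · intro i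
    refine ⟨x i, rword (t (i+1)) (max (M i) (max (M (i+1)) 1)), ?_, ?_, ?_, ?_, ?_⟩
    · intro hnil
      have hcl := congrArg List.length hnil
      simp only [rword_length, List.length_nil] at hcl
      omega
    · rw [hrw]
      exact G.wordAt_mem_lang hx _ _
    · rw [← hcons i _, hrw]
      exact G.wordAt_mem_lang hx _ _
    · rw [← hcons i _]
      exact hM i (max (M i) (max (M (i+1)) 1) + 1) (by omega)
    · exact hM (i+1) (max (M i) (max (M (i+1)) 1)) (by omega)

/-! #### Under Condition (∗), essential vertices are Krieger vertices -/

lemma essential_sub [Finite G.E] [Finite G.V] (hstar : ConditionStar G.presents)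
    {P : Set (ℕ → ℕ)} (hP : P ∈ pscEssential G.presents) :
    ∃ u ∈ rayPlus G.presents, P = predInf G.presents u := by
  obtain ⟨Q, hQ0, hQe⟩ := hP
  choose a wseq hne hwl hawl hQa hQw using hQe
  set A : ℕ → List ℕ :=
    fun n => Nat.rec [a 0] (fun m prev => prev ++ [a ((m:ℤ) + 1)]) n with hA
  have hAsucc : ∀ n : ℕ, A (n+1) = A n ++ [a ((n:ℤ) + 1)] := fun n => rfl
  have hAlen : ∀ n, (A n).length = n + 1 := by
    intro n
    induction n with
    | zero => rfl
    | succ n ih =>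
      rw [hAsucc, List.length_append, ih]
      rfl
  set W : ℕ → List ℕ := fun n => A n ++ wseq (n:ℤ) with hW
  have hQW : ∀ n : ℕ, Q 0 = predWord G.presents (W n) := by
    intro n
    induction n with
    | zero =>
      show Q 0 = predWord G.presents ([a 0] ++ wseq ((0:ℕ):ℤ))
      rw [List.singleton_append]
      show Q 0 = predWord G.presents (a 0 :: wseq ((0:ℕ):ℤ))
      rw [show (((0:ℕ)):ℤ) = (0:ℤ) by norm_num]
      exact hQa 0
    | succ n ih =>
      have hmid : predWord G.presents (wseq (n:ℤ)) =
          predWord G.presents (a ((n:ℤ)+1) :: wseq ((n:ℤ)+1)) := by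
        rw [← hQw (n:ℤ)]
        exact hQa ((n:ℤ)+1)
      show Q 0 = predWord G.presents (A (n+1) ++ wseq (((n+1:ℕ)):ℤ))
      rw [show (((n+1:ℕ)):ℤ) = (n:ℤ)+1 by push_cast; ring, hAsucc, List.append_assoc,
        List.singleton_append, ← G.predWord_append_congr hmid (A n)]
      exact ih
  have hWlen : ∀ n, n + 1 ≤ (W n).length := by
    intro n
    rw [hW]
    show n + 1 ≤ (A n ++ wseq (n:ℤ)).length
    rw [List.length_append, hAlen]
    omega
  have hFinf : (Set.range W).Infinite := by
    intro hfin
    obtain ⟨L', hL'⟩ := (hfin.image List.length).bddAbove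
    have h1 : (W (L'+1)).length ≤ L' := hL' (Set.mem_image_of_mem _ ⟨L'+1, rfl⟩)
    have h2 := hWlen (L'+1)
    omega
  have hQ0ne : (Q 0).Nonempty := by
    rw [hQa 0]
    exact (G.lang_iff_predWord_nonempty _).mp (hawl 0)
  have hWlang : ∀ n, W n ∈ lang G.presents := by
    intro n
    rw [G.lang_iff_predWord_nonempty, ← hQW n]
    exact hQ0ne
  obtain ⟨L, hL⟩ := G.exists_sep
  obtain ⟨u, hu, hustar⟩ := hstar L (Set.range W) hFinf
    (by rintro w ⟨n, rfl⟩; exact hWlang n)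
    (by rintro w₁ ⟨n, rfl⟩ w₂ ⟨n', rfl⟩
        exact G.predLWord_congr (by rw [← hQW n, ← hQW n']) L)
  obtain ⟨M, hM⟩ := G.predInf_stab u
  have hPlr : predLRay G.presents L u = predLWord G.presents L (rword u M) := by
    ext g
    constructor
    · rintro ⟨hgL, hglen, hgray⟩
      rw [G.consRay_mem_iff] at hgray
      exact ⟨hgL, hglen, hgray M⟩
    · rintro ⟨hgL, hglen, hgw⟩
      refine ⟨hgL, hglen, ?_⟩
      rw [G.consRay_mem_iff]
      intro m
      by_cases h : m ≤ M
      · rw [← List.take_append_drop m (rword u M), rword_take u h,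
          ← List.append_assoc] at hgw
        exact (G.lang_append hgw).1
      · have hcl : predWord G.presents (rword u M) = predWord G.presents (rword u m) := by
          rw [← hM M le_rfl, hM m (by omega)]
        have hg2 : g ∈ predLWord G.presents L (rword u m) := by
          rw [← G.predLWord_congr hcl L]
          exact ⟨hgL, hglen, hgw⟩
        exact hg2.2.2
  have h1 : predLWord G.presents L (W 0) = predLRay G.presents L u := hustar (W 0) ⟨0, rfl⟩
  have h2 : predWord G.presents (W 0) = predWord G.presents (rword u M) :=
    hL _ _ (hWlang 0) (G.rword_mem_lang hu M) (h1.trans hPlr)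
  refine ⟨u, hu, ?_⟩
  rw [← hQ0, hQW 0, h2]
  exact (hM M le_rfl).symm

/-! #### König-type arguments for the converse direction -/

lemma pscGood_step [Finite G.E] [Finite G.V] {R : Set (ℕ → ℕ)}
    (hR : ∀ n : ℕ, ∃ c : ℕ → Set (ℕ → ℕ), c 0 = R ∧ ∀ k < n, pscEdge G.presents (c k) (c (k+1))) :
    ∃ R', pscEdge G.presents R R' ∧
      ∀ n : ℕ, ∃ c : ℕ → Set (ℕ → ℕ), c 0 = R' ∧ ∀ k < n, pscEdge G.presents (c k) (c (k+1)) := by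
  choose c hc0 hce using hR
  have hfin : {b | ∃ n ∈ (Set.univ : Set ℕ), c (n+1) 1 = b}.Finite := by
    apply Set.Finite.subset G.predWord_range_finite
    rintro b ⟨n, -, hb⟩
    obtain ⟨a', w', -, -, -, -, hP'⟩ := hce (n+1) 0 (by omega)
    exact ⟨w', by rw [← hb, hP']⟩
  obtain ⟨b, hb⟩ := aux_pigeon Set.infinite_univ (fun n => c (n+1) 1) hfin
  obtain ⟨n₀, -, hn₀⟩ := hb.nonempty
  refine ⟨b, ?_, ?_⟩
  · have he := hce (n₀+1) 0 (by omega)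
    rw [hc0 (n₀+1)] at he
    rw [← hn₀]
    exact he
  · intro n
    obtain ⟨n', hn', hge⟩ := aux_ge hb n
    refine ⟨fun k => c (n'+1) (k+1), hn'.2, ?_⟩
    intro k hk
    exact hce (n'+1) (k+1) (by omega)

lemma pscGood_chain [Finite G.E] [Finite G.V] {R : Set (ℕ → ℕ)}
    (hR : ∀ n : ℕ, ∃ c : ℕ → Set (ℕ → ℕ), c 0 = R ∧ ∀ k < n, pscEdge G.presents (c k) (c (k+1))) :
    ∃ c : ℕ → Set (ℕ → ℕ), c 0 = R ∧ ∀ k, pscEdge G.presents (c k) (c (k+1)) := by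
  classical
  set Gd : Set (ℕ → ℕ) → Prop := fun P =>
    ∀ n : ℕ, ∃ c : ℕ → Set (ℕ → ℕ), c 0 = P ∧ ∀ k < n, pscEdge G.presents (c k) (c (k+1))
    with hGd
  have hstep : ∀ p : {P // Gd P}, ∃ q : {P // Gd P}, pscEdge G.presents p.1 q.1 := by
    rintro ⟨P, hP⟩
    obtain ⟨R', h1, h2⟩ := G.pscGood_step hP
    exact ⟨⟨R', h2⟩, h1⟩
  choose nxt hnxt using hstep
  refine ⟨fun k => (nxt^[k] ⟨R, hR⟩).1, rfl, ?_⟩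
  intro k
  show pscEdge G.presents (nxt^[k] ⟨R, hR⟩).1 (nxt^[k+1] ⟨R, hR⟩).1
  rw [Function.iterate_succ_apply']
  exact hnxt _

lemma psc_backward [Finite G.E] {w₀ : List ℕ} (hw₀ : w₀ ∈ lang G.presents) (hne : w₀ ≠ []) :
    ∃ ws : ℕ → List ℕ, ws 0 = w₀ ∧ ∀ k,
      pscEdge G.presents (predWord G.presents (ws (k+1))) (predWord G.presents (ws k)) := by
  have hstep : ∀ p : {w : List ℕ // w ∈ lang G.presents ∧ w ≠ []},
      ∃ q : {w : List ℕ // w ∈ lang G.presents ∧ w ≠ []},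
        pscEdge G.presents (predWord G.presents q.1) (predWord G.presents p.1) := by
    rintro ⟨w, hwl, hwn⟩
    obtain ⟨aa, ha⟩ := G.lang_extend_left hwl
    exact ⟨⟨aa :: w, ha, by simp⟩, ⟨aa, w, hwn, hwl, ha, rfl, rfl⟩⟩
  choose nxt hnxt using hstep
  refine ⟨fun k => (nxt^[k] ⟨w₀, hw₀, hne⟩).1, rfl, ?_⟩
  intro k
  show pscEdge G.presents (predWord G.presents (nxt^[k+1] ⟨w₀, hw₀, hne⟩).1)
    (predWord G.presents (nxt^[k] ⟨w₀, hw₀, hne⟩).1)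
  rw [Function.iterate_succ_apply']
  exact hnxt _

end LGraph

end Statement9Aux

-- ===AUX END===

/-- A sofic shift `X` satisfies Condition (∗) if and only if
the left Krieger cover of `X` is the maximal essential subgraph of the past set
cover of `X`; equivalently, the vertex set of the maximal essential subgraph of
the past set cover equals `{P∞(x⁺) : x⁺ ∈ X⁺}`, the vertex set of the left
Krieger cover. -/
theorem statement9 (X : Set Seq) (hX : IsSofic X) :
    ConditionStar X ↔
      pscEssential X = {P | ∃ u ∈ rayPlus X, P = predInf X u} := by
  obtain ⟨G, hV, hE, rfl⟩ := hX
  haveI : Finite G.V := hV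
  haveI : Finite G.E := hE
  constructor
  · intro hstar
    apply Set.eq_of_subset_of_subset
    · intro P hP
      exact G.essential_sub hstar hP
    · rintro P ⟨u, hu, rfl⟩
      exact G.predInf_mem_essential hu
  · intro hEq l F hFinf hFL hFeq
    obtain ⟨b, hb⟩ := aux_pigeon hFinf (fun w => predWord G.presents w)
      (Set.Finite.subset G.predWord_range_finite (by rintro P ⟨w, -, rfl⟩; exact ⟨w, rfl⟩))
    have hb' : {w | w ∈ F ∧ predWord G.presents w = b}.Infinite := hb
    have hbsubL : {w | w ∈ F ∧ predWord G.presents w = b} ⊆ lang G.presents :=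
      fun w hw => hFL hw.1
    obtain ⟨w₀, hw₀m, hw₀len⟩ := G.lang_unbounded hb' hbsubL 1
    have hw₀lang : w₀ ∈ lang G.presents := hFL hw₀m.1
    have hw₀ne : w₀ ≠ [] := by
      intro h
      rw [h] at hw₀len
      simp at hw₀len
    have hgood : ∀ n : ℕ, ∃ c : ℕ → Set (ℕ → ℕ), c 0 = b ∧
        ∀ k < n, pscEdge G.presents (c k) (c (k+1)) := by
      intro n
      obtain ⟨w, hwm, hwlen⟩ := G.lang_unbounded hb' hbsubL (n+2)
      refine ⟨fun k => predWord G.presents (w.drop k), ?_, ?_⟩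
      · show predWord G.presents (w.drop 0) = b
        rw [List.drop_zero]
        exact hwm.2
      · intro k hk
        show pscEdge G.presents (predWord G.presents (w.drop k))
          (predWord G.presents (w.drop (k+1)))
        have hklen : k < w.length := by omega
        refine ⟨w[k]'hklen, w.drop (k+1), ?_, ?_, ?_, ?_, rfl⟩
        · intro hnil
          have hcl := congrArg List.length hnil
          simp only [List.length_drop, List.length_nil] at hcl
          omega
        · exact G.lang_drop (hFL hwm.1) (k+1)
        · rw [← List.drop_eq_getElem_cons hklen]
          exact G.lang_drop (hFL hwm.1) k
        · rw [← List.drop_eq_getElem_cons hklen]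
    obtain ⟨c, hc0, hce⟩ := G.pscGood_chain hgood
    obtain ⟨ws, hws0, hwse⟩ := G.psc_backward hw₀lang hw₀ne
    have hbess : b ∈ pscEssential G.presents := by
      refine ⟨fun i => if 0 ≤ i then c i.toNat else predWord G.presents (ws (-i).toNat),
        ?_, ?_⟩
      · show (if 0 ≤ (0:ℤ) then c (0:ℤ).toNat else
            predWord G.presents (ws (-(0:ℤ)).toNat)) = b
        rw [if_pos le_rfl]
        exact hc0
      · intro i
        show pscEdge G.presents
          (if 0 ≤ i then c i.toNat else predWord G.presents (ws (-i).toNat))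
          (if 0 ≤ i + 1 then c (i+1).toNat else predWord G.presents (ws (-(i+1)).toNat))
        by_cases h1 : 0 ≤ i
        · have h2 : 0 ≤ i + 1 := by omega
          rw [if_pos h1, if_pos h2, show (i+1).toNat = i.toNat + 1 by omega]
          exact hce i.toNat
        · by_cases h2 : 0 ≤ i + 1
          · rw [if_neg h1, if_pos h2, show (-i).toNat = 1 by omega,
              show (i+1).toNat = 0 by omega, hc0, ← hw₀m.2, ← hws0]
            exact hwse 0
          · rw [if_neg h1, if_neg h2, show (-i).toNat = (-(i+1)).toNat + 1 by omega]
            exact hwse ((-(i+1)).toNat)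
    rw [hEq] at hbess
    obtain ⟨u, hu, hbu⟩ := hbess
    refine ⟨u, hu, ?_⟩
    intro w hw
    have h1 : predLWord G.presents l w = predLWord G.presents l w₀ := hFeq w hw w₀ hw₀m.1
    have h2 : predWord G.presents w₀ = predInf G.presents u := by
      rw [hw₀m.2]
      exact hbu
    rw [h1, G.predLWord_eq_predLRay h2 l]

end SymbolicDynamics
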